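/- Local character of provability: let T be a coherent theory with its inductively generated cover relation ◁_T on conditions. If (X;A) ◁_T U and ψ is a formula with free variables in X such that T, B ⊢_Y ψf for every f : (Y;B) → (X;A) in U, then T, A ⊢_X ψ. -/

import Mathlib

/- STATEMENT 16: local character of provability for the cover relation generated by a
coherent theory T. -/

namespace CoherentForcing

/- ## Syntax: terms, atoms, conditions, substitutions -/

/-- Ground terms over a signature of function symbols `F` with arities `far`,
with named variables in ℕ. -/
inductive Tm (F : Type) (far : F → ℕ) : Type
  | fvar (x : ℕ) : Tm F far
  | app (f : F) (a : Fin (far f) → Tm F far) : Tm F far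

variable {F : Type} {far : F → ℕ} {R : Type} {rar : R → ℕ}

/-- Free variables of a ground term. -/
def Tm.fv : Tm F far → Set ℕ
  | .fvar x => {x}
  | .app _ a => ⋃ i, (a i).fv

/-- Applying a substitution to a ground term. -/
def Tm.subst (σ : ℕ → Tm F far) : Tm F far → Tm F far
  | .fvar x => σ x
  | .app f a => .app f fun i => (a i).subst σ

/-- Atoms over relation symbols `R` with arities `rar`. -/
abbrev Atom (F : Type) (far : F → ℕ) (R : Type) (rar : R → ℕ) : Type :=
  (r : R) × (Fin (rar r) → Tm F far)

/-- Free variables of an atom. -/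
def Atom.fv (a : Atom F far R rar) : Set ℕ := ⋃ i, (a.2 i).fv

/-- Applying a substitution to an atom. -/
def Atom.subst (σ : ℕ → Tm F far) (a : Atom F far R rar) : Atom F far R rar :=
  ⟨a.1, fun i => (a.2 i).subst σ⟩

/-- A forcing condition (X;A): a finite set X of variables together with a finite
set A of atoms whose variables lie in X. -/
structure Cond (F : Type) (far : F → ℕ) (R : Type) (rar : R → ℕ) : Type where
  X : Finset ℕ
  A : Set (Atom F far R rar)
  finA : A.Finite
  wf : ∀ a ∈ A, Atom.fv a ⊆ ↑X

/-- The three categories of forcing conditions: renamings, variable substitutions,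
term substitutions. -/
inductive MC | rn | vs | ts

/-- `Mor mc D C σ`: the substitution `σ` is a morphism `D ⟶ C` of conditions in the
category determined by `mc`. -/
structure Mor (mc : MC) (D C : Cond F far R rar) (σ : ℕ → Tm F far) : Prop where
  fvsub : ∀ x ∈ C.X, (σ x).fv ⊆ ↑D.X
  atoms : ∀ a ∈ C.A, Atom.subst σ a ∈ D.A
  cls : match mc with
    | .ts => True
    | .vs => ∀ x ∈ C.X, ∃ y, σ x = Tm.fvar y
    | .rn => (∀ x ∈ C.X, ∃ y, σ x = Tm.fvar y) ∧ Set.InjOn σ ↑C.X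

/-- `σ` is an isomorphism of conditions `D ≅ C` (a bijective renaming). -/
def IsIsoMor (D C : Cond F far R rar) (σ : ℕ → Tm F far) : Prop :=
  Mor .rn D C σ ∧ ∃ τ : ℕ → Tm F far, Mor .rn C D τ ∧
    (∀ x ∈ C.X, (σ x).subst τ = Tm.fvar x) ∧ (∀ y ∈ D.X, (τ y).subst σ = Tm.fvar y)

/-- A sink: a set of pairs (domain condition, substitution), thought of as a family of
morphisms into a fixed condition. -/
abbrev Sink (F : Type) (far : F → ℕ) (R : Type) (rar : R → ℕ) : Type :=
  Set (Cond F far R rar × (ℕ → Tm F far))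

/- ## Formulas (infinitary first-order, locally nameless: named free variables,
de Bruijn indices for bound variables, the variable bound by the nearest enclosing
binder being the *last* index) -/

/-- Terms in context `n`: named free variables plus `n` de Bruijn indices. -/
inductive Tmc (F : Type) (far : F → ℕ) (n : ℕ) : Type
  | fvar (x : ℕ) : Tmc F far n
  | bvar (i : Fin n) : Tmc F far n
  | app (f : F) (a : Fin (far f) → Tmc F far n) : Tmc F far n

/-- A ground term is a term in any context. -/
def Tm.toTmc {n : ℕ} : Tm F far → Tmc F far n
  | .fvar x => .fvar x
  | .app f a => .app f fun i => (a i).toTmc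

/-- Evaluating a term in context via `σ` on free variables and `ρ` on indices. -/
def Tmc.eval (σ : ℕ → Tm F far) {n : ℕ} (ρ : Fin n → Tm F far) :
    Tmc F far n → Tm F far
  | .fvar x => σ x
  | .bvar i => ρ i
  | .app f a => .app f fun i => (a i).eval σ ρ

/-- Named free variables of a term in context. -/
def Tmc.fv {n : ℕ} : Tmc F far n → Set ℕ
  | .fvar x => {x}
  | .bvar _ => ∅
  | .app _ a => ⋃ i, (a i).fv

/-- A term in context has no named free variables. -/
def Tmc.noFvar {n : ℕ} : Tmc F far n → Prop
  | .fvar _ => False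
  | .bvar _ => True
  | .app _ a => ∀ i, (a i).noFvar

/-- Applying a substitution to the named free variables of a term in context. -/
def Tmc.substFv (σ : ℕ → Tm F far) {n : ℕ} : Tmc F far n → Tmc F far n
  | .fvar x => (σ x).toTmc
  | .bvar i => .bvar i
  | .app f a => .app f fun i => (a i).substFv σ

/-- (Possibly infinitary) first-order formulas in context `n`. -/
inductive Fml (F : Type) (far : F → ℕ) (R : Type) (rar : R → ℕ) : ℕ → Type 1
  | atom {n : ℕ} (r : R) (ts : Fin (rar r) → Tmc F far n) : Fml F far R rar n
  | eq {n : ℕ} (s t : Tmc F far n) : Fml F far R rar n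
  | top {n : ℕ} : Fml F far R rar n
  | bot {n : ℕ} : Fml F far R rar n
  | conj {n : ℕ} : Fml F far R rar n → Fml F far R rar n → Fml F far R rar n
  | disj {n : ℕ} (I : Type) (f : I → Fml F far R rar n) : Fml F far R rar n
  | imp {n : ℕ} : Fml F far R rar n → Fml F far R rar n → Fml F far R rar n
  | all {n : ℕ} : Fml F far R rar (n + 1) → Fml F far R rar n
  | ex {n : ℕ} : Fml F far R rar (n + 1) → Fml F far R rar n

/-- Negation. -/
abbrev Fml.neg {n : ℕ} (φ : Fml F far R rar n) : Fml F far R rar n := .imp φ .bot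

/-- Named free variables of a formula. -/
def Fml.fv : {n : ℕ} → Fml F far R rar n → Set ℕ
  | _, .atom _ ts => ⋃ i, (ts i).fv
  | _, .eq s t => s.fv ∪ t.fv
  | _, .top => ∅
  | _, .bot => ∅
  | _, .conj φ ψ => φ.fv ∪ ψ.fv
  | _, .disj _ f => ⋃ i, (f i).fv
  | _, .imp φ ψ => φ.fv ∪ ψ.fv
  | _, .all φ => φ.fv
  | _, .ex φ => φ.fv

/-- Applying a substitution to the named free variables of a formula. -/
def Fml.substFv (σ : ℕ → Tm F far) : {n : ℕ} → Fml F far R rar n → Fml F far R rar n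
  | _, .atom r ts => .atom r fun i => (ts i).substFv σ
  | _, .eq s t => .eq (s.substFv σ) (t.substFv σ)
  | _, .top => .top
  | _, .bot => .bot
  | _, .conj φ ψ => .conj (φ.substFv σ) (ψ.substFv σ)
  | _, .disj I f => .disj I fun i => (f i).substFv σ
  | _, .imp φ ψ => .imp (φ.substFv σ) (ψ.substFv σ)
  | _, .all φ => .all (φ.substFv σ)
  | _, .ex φ => .ex (φ.substFv σ)

/-- Shifting de Bruijn indices of a term into an extended context. -/
def Tmc.shift {k : ℕ} : Tmc F far k → Tmc F far (k + 1)
  | .fvar x => .fvar x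
  | .bvar i => .bvar i.castSucc
  | .app f a => .app f fun i => (a i).shift

/-- Simultaneous substitution for the de Bruijn indices of a term. -/
def Tmc.bsubst {m k : ℕ} (θ : Fin m → Tmc F far k) : Tmc F far m → Tmc F far k
  | .fvar x => .fvar x
  | .bvar i => θ i
  | .app f a => .app f fun i => (a i).bsubst θ

/-- Extending a de Bruijn substitution under a binder. -/
def extendB {m k : ℕ} (θ : Fin m → Tmc F far k) : Fin (m + 1) → Tmc F far (k + 1) :=
  Fin.snoc (fun i => (θ i).shift) (.bvar (Fin.last k))

/-- Simultaneous substitution for the de Bruijn indices of a formula. -/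
def Fml.bsubst : {m k : ℕ} → (Fin m → Tmc F far k) → Fml F far R rar m → Fml F far R rar k
  | _, _, θ, .atom r ts => .atom r fun i => (ts i).bsubst θ
  | _, _, θ, .eq s t => .eq (s.bsubst θ) (t.bsubst θ)
  | _, _, _, .top => .top
  | _, _, _, .bot => .bot
  | _, _, θ, .conj φ ψ => .conj (φ.bsubst θ) (ψ.bsubst θ)
  | _, _, θ, .disj I f => .disj I fun i => (f i).bsubst θ
  | _, _, θ, .imp φ ψ => .imp (φ.bsubst θ) (ψ.bsubst θ)
  | _, _, θ, .all φ => .all (φ.bsubst (extendB θ))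
  | _, _, θ, .ex φ => .ex (φ.bsubst (extendB θ))

/-- Opening the outermost binder of a one-variable formula with a ground term. -/
def Fml.open0 (t : Tm F far) (φ : Fml F far R rar 1) : Fml F far R rar 0 :=
  φ.bsubst fun _ => t.toTmc

/- ## Coherent theories and the generated coverage -/

/-- Atoms in context `n` (for the components of coherent axioms). -/
abbrev CAtom (F : Type) (far : F → ℕ) (R : Type) (rar : R → ℕ) (n : ℕ) : Type :=
  (r : R) × (Fin (rar r) → Tmc F far n)

/-- Instantiating an atom in context `m` by an assignment of its de Bruijn variables. -/
def CAtom.inst {m : ℕ} (ι : Fin m → Tm F far) (a : CAtom F far R rar m) :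
    Atom F far R rar :=
  ⟨a.1, fun i => (a.2 i).eval Tm.fvar ι⟩

/-- A coherent axiom ∀ x₁…x_m (φ₀ → ⋁_d ∃ y₁…y_{k_d}. φ_d), where the φ's are finite
conjunctions of atoms (as lists), presented without named free variables. -/
structure CohAx (F : Type) (far : F → ℕ) (R : Type) (rar : R → ℕ) : Type where
  m : ℕ
  hyp : List (CAtom F far R rar m)
  concl : List ((k : ℕ) × List (CAtom F far R rar (m + k)))
  hypClosed : ∀ a ∈ hyp, ∀ i, (a.2 i).noFvar
  conclClosed : ∀ d ∈ concl, ∀ a ∈ d.2, ∀ i, (a.2 i).noFvar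

/-- The `j`-th fresh variable not occurring in the condition `C`. -/
def freshVar (C : Cond F far R rar) (j : ℕ) : ℕ := C.X.sup id + 1 + j

lemma Tm.fv_eval {n : ℕ} (ι : Fin n → Tm F far) (t : Tmc F far n) (ht : t.noFvar) :
    (t.eval Tm.fvar ι).fv ⊆ ⋃ j, (ι j).fv := by
  induction t with
  | fvar x => exact absurd ht id
  | bvar i => exact Set.subset_iUnion (fun j => (ι j).fv) i
  | app f a ih =>
    intro y hy
    obtain ⟨i, hi⟩ := Set.mem_iUnion.mp hy
    exact ih i (ht i) hi

/-- The extension (X, y⃗; A, φ_d) of a condition by one disjunct of an instantiated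
coherent axiom, using fresh variables y⃗ for the existentially bound variables. -/
def Cond.extend (C : Cond F far R rar) {m k : ℕ} (ι : Fin m → Tm F far)
    (hι : ∀ i, (ι i).fv ⊆ ↑C.X) (ats : List (CAtom F far R rar (m + k)))
    (hats : ∀ a ∈ ats, ∀ i, (a.2 i).noFvar) : Cond F far R rar where
  X := C.X ∪ Finset.image (fun j : Fin k => freshVar C j) Finset.univ
  A := C.A ∪ (CAtom.inst (Fin.append ι fun j : Fin k => Tm.fvar (freshVar C j))) ''
        {a | a ∈ ats}
  finA := C.finA.union (ats.finite_toSet.image _)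
  wf := by
    rintro a (ha | ⟨b, hb, rfl⟩)
    · exact (C.wf a ha).trans (by intro y hy; simp only [Finset.coe_union]; exact Or.inl hy)
    · intro y hy
      obtain ⟨i, hi⟩ := Set.mem_iUnion.mp hy
      obtain ⟨j, hj⟩ := Set.mem_iUnion.mp (Tm.fv_eval _ _ (hats b hb i) hi)
      simp only [Finset.coe_union, Finset.coe_image, Set.mem_union]
      revert hj
      refine Fin.addCases (fun i0 hj => ?_) (fun j0 hj => ?_) j
      · rw [Fin.append_left] at hj
        exact Or.inl (hι i0 hj)
      · rw [Fin.append_right] at hj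
        rcases hj with rfl
        exact Or.inr ⟨j0, Finset.mem_coe.mpr (Finset.mem_univ j0), rfl⟩

/-- The coverage ◁_T generated by a coherent theory `T`: isomorphism singletons are
covers, and for each instance of an axiom of `T` applicable at `C`, the union of
covers of the extensions of `C` by the disjuncts is a cover of `C` (the connecting
morphisms being the identity substitutions). -/
inductive Cov (T : Set (CohAx F far R rar)) :
    Cond F far R rar → Sink F far R rar → Prop
  | iso {C D : Cond F far R rar} {σ : ℕ → Tm F far} (h : IsIsoMor D C σ) :
      Cov T C {(D, σ)}
  | step {C : Cond F far R rar} (ax : CohAx F far R rar) (hax : ax ∈ T)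
      (ι : Fin ax.m → Tm F far) (hι : ∀ i, (ι i).fv ⊆ ↑C.X)
      (hhyp : ∀ a ∈ ax.hyp, CAtom.inst ι a ∈ C.A)
      (U : Fin ax.concl.length → Sink F far R rar)
      (hU : ∀ i : Fin ax.concl.length,
        Cov T (C.extend ι hι (ax.concl.get i).2
            (fun a ha j => ax.conclClosed _ (List.get_mem _ i) a ha j))
          (U i)) :
      Cov T C (⋃ i, U i)

/- ## The forcing relation -/

/-- The forcing relation `C ⊩ φ[σ, ρ]`, where `mc` determines the category of
conditions (renamings / variable substitutions / term substitutions), `cov` is a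
coverage, `σ` interprets the named free variables and `ρ` the de Bruijn variables
of `φ` by terms over `C`. -/
def Forces (mc : MC) (cov : Cond F far R rar → Sink F far R rar → Prop) :
    {n : ℕ} → Cond F far R rar → (ℕ → Tm F far) → (Fin n → Tm F far) →
      Fml F far R rar n → Prop
  | _, C, σ, ρ, .atom r ts => ∃ U, cov C U ∧ ∀ p ∈ U,
      (⟨r, fun i => ((ts i).eval σ ρ).subst p.2⟩ : Atom F far R rar) ∈ p.1.A
  | _, C, σ, ρ, .eq s t => ∃ U, cov C U ∧ ∀ p ∈ U,
      (s.eval σ ρ).subst p.2 = (t.eval σ ρ).subst p.2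
  | _, _, _, _, .top => True
  | _, C, _, _, .bot => cov C ∅
  | _, C, σ, ρ, .conj φ ψ => Forces mc cov C σ ρ φ ∧ Forces mc cov C σ ρ ψ
  | _, C, σ, ρ, .disj _ f => ∃ U, cov C U ∧ ∀ p ∈ U, ∃ i,
      Forces mc cov p.1 (fun x => (σ x).subst p.2) (fun i0 => (ρ i0).subst p.2) (f i)
  | _, C, σ, ρ, .imp φ ψ => ∀ D τ, Mor mc D C τ →
      Forces mc cov D (fun x => (σ x).subst τ) (fun i => (ρ i).subst τ) φ →
      Forces mc cov D (fun x => (σ x).subst τ) (fun i => (ρ i).subst τ) ψ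
  | _, C, σ, ρ, .all φ => ∀ D τ, Mor mc D C τ → ∀ t : Tm F far, t.fv ⊆ ↑D.X →
      Forces mc cov D (fun x => (σ x).subst τ)
        (Fin.snoc (fun i => (ρ i).subst τ) t) φ
  | _, C, σ, ρ, .ex φ => ∃ U, cov C U ∧ ∀ p ∈ U, ∃ t, t.fv ⊆ ↑p.1.X ∧
      Forces mc cov p.1 (fun x => (σ x).subst p.2)
        (Fin.snoc (fun i => (ρ i).subst p.2) t) φ

/- ## Provability -/

/-- Intuitionistic (or, when `em` holds, classical) provability `Γ ⊢_X φ` in logic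
without equality, sound for empty domains: `X` is the set of free variables allowed
in the derivation. -/
inductive Prv (em : Prop) :
    Finset ℕ → Set (Fml F far R rar 0) → Fml F far R rar 0 → Prop
  | ax {X Γ φ} (h : φ ∈ Γ) : Prv em X Γ φ
  | topI {X Γ} : Prv em X Γ .top
  | botE {X Γ φ} : Prv em X Γ .bot → Prv em X Γ φ
  | conjI {X Γ φ ψ} : Prv em X Γ φ → Prv em X Γ ψ → Prv em X Γ (.conj φ ψ)
  | conjE1 {X Γ φ ψ} : Prv em X Γ (.conj φ ψ) → Prv em X Γ φ
  | conjE2 {X Γ φ ψ} : Prv em X Γ (.conj φ ψ) → Prv em X Γ ψ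
  | disjI {X Γ I} {f : I → Fml F far R rar 0} (i : I) :
      Prv em X Γ (f i) → Prv em X Γ (.disj I f)
  | disjE {X Γ I} {f : I → Fml F far R rar 0} {ψ} :
      Prv em X Γ (.disj I f) → (∀ i, Prv em X (insert (f i) Γ) ψ) → Prv em X Γ ψ
  | impI {X Γ φ ψ} : Prv em X (insert φ Γ) ψ → Prv em X Γ (.imp φ ψ)
  | impE {X Γ φ ψ} : Prv em X Γ (.imp φ ψ) → Prv em X Γ φ → Prv em X Γ ψ
  | allI {X : Finset ℕ} {Γ} {φ} (x : ℕ) (hx : x ∉ X) (hφ : x ∉ Fml.fv (.all φ))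
      (hΓ : ∀ ψ ∈ Γ, x ∉ Fml.fv ψ) :
      Prv em (insert x X) Γ (Fml.open0 (.fvar x) φ) → Prv em X Γ (.all φ)
  | allE {X : Finset ℕ} {Γ} {φ} (t : Tm F far) (ht : t.fv ⊆ ↑X) :
      Prv em X Γ (.all φ) → Prv em X Γ (Fml.open0 t φ)
  | exI {X : Finset ℕ} {Γ} {φ} (t : Tm F far) (ht : t.fv ⊆ ↑X) :
      Prv em X Γ (Fml.open0 t φ) → Prv em X Γ (.ex φ)
  | exE {X : Finset ℕ} {Γ} {φ} {ψ} (x : ℕ) (hx : x ∉ X) (hφ : x ∉ Fml.fv (.ex φ)) (hψ : x ∉ Fml.fv ψ)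
      (hΓ : ∀ χ ∈ Γ, x ∉ Fml.fv χ) :
      Prv em X Γ (.ex φ) →
      Prv em (insert x X) (insert (Fml.open0 (.fvar x) φ) Γ) ψ → Prv em X Γ ψ
  | em {X Γ} (φ : Fml F far R rar 0) (h : em) :
      Prv em X Γ (.disj Bool fun b => bif b then φ else φ.neg)

/- ## Coherent axioms as formulas -/

/-- An atom of a condition, as a closed formula. -/
def atomF (a : Atom F far R rar) : Fml F far R rar 0 :=
  .atom a.1 fun i => (a.2 i).toTmc

/-- Universal closure. -/
def Fml.alls : (m : ℕ) → Fml F far R rar m → Fml F far R rar 0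
  | 0, φ => φ
  | m + 1, φ => Fml.alls m (.all φ)

/-- Iterated existential quantification. -/
def Fml.exs {m : ℕ} : (k : ℕ) → Fml F far R rar (m + k) → Fml F far R rar m
  | 0, φ => φ
  | k + 1, φ => Fml.exs k (.ex φ)

/-- Conjunction of a list of atoms in context. -/
def listConj {n : ℕ} (l : List (CAtom F far R rar n)) : Fml F far R rar n :=
  l.foldr (fun a ψ => .conj (.atom a.1 a.2) ψ) .top

/-- A coherent axiom as a sentence: ∀ x⃗ (φ₀ → ⋁_d ∃ y⃗_d. φ_d). -/
def CohAx.toFml (ax : CohAx F far R rar) : Fml F far R rar 0 :=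
  .alls ax.m (.imp (listConj ax.hyp)
    (.disj (Fin ax.concl.length) fun i =>
      .exs (ax.concl.get i).1 (listConj (ax.concl.get i).2)))

/- ## Classes of formulas -/

/-- Generalized geometric implications (in logic without equality):
φ ::= α | φ₁ ∧ φ₂ | ⋁ᵢ φᵢ | ∃x.φ | ∀x.φ | (α → φ) with α an atom, ⊤ or ⊥. -/
inductive GGI : {n : ℕ} → Fml F far R rar n → Prop
  | atom {n r ts} : GGI (n := n) (.atom r ts)
  | top {n} : GGI (n := n) .top
  | bot {n} : GGI (n := n) .bot
  | conj {n} {φ ψ : Fml F far R rar n} : GGI φ → GGI ψ → GGI (.conj φ ψ)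
  | disj {n I} {f : I → Fml F far R rar n} : (∀ i, GGI (f i)) → GGI (.disj I f)
  | ex {n} {φ : Fml F far R rar (n + 1)} : GGI φ → GGI (.ex φ)
  | all {n} {φ : Fml F far R rar (n + 1)} : GGI φ → GGI (.all φ)
  | impAtom {n r ts} {φ : Fml F far R rar n} : GGI φ → GGI (.imp (.atom r ts) φ)
  | impTop {n} {φ : Fml F far R rar n} : GGI φ → GGI (.imp .top φ)
  | impBot {n} {φ : Fml F far R rar n} : GGI φ → GGI (.imp .bot φ)

/-- Positive formulas (no equality): built from atoms, ⊤, ⊥ by ∧, ⋁, ∃. -/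
inductive Pos : {n : ℕ} → Fml F far R rar n → Prop
  | atom {n r ts} : Pos (n := n) (.atom r ts)
  | top {n} : Pos (n := n) .top
  | bot {n} : Pos (n := n) .bot
  | conj {n} {φ ψ : Fml F far R rar n} : Pos φ → Pos ψ → Pos (.conj φ ψ)
  | disj {n I} {f : I → Fml F far R rar n} : (∀ i, Pos (f i)) → Pos (.disj I f)
  | ex {n} {φ : Fml F far R rar (n + 1)} : Pos φ → Pos (.ex φ)

/-- Geometric implications: universally quantified implications between positive
formulas. -/
inductive GeomImp : {n : ℕ} → Fml F far R rar n → Prop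
  | base {n} {φ ψ : Fml F far R rar n} : Pos φ → Pos ψ → GeomImp (Fml.imp φ ψ)
  | all {n} {φ : Fml F far R rar (n + 1)} : GeomImp φ → GeomImp (Fml.all φ)


/- ## Auxiliary lemmas for Statement 16 -/

section Aux16

open Classical

/- ### Tm-level lemmas -/

lemma Tm.subst_congr {σ σ' : ℕ → Tm F far} {t : Tm F far}
    (h : ∀ x ∈ t.fv, σ x = σ' x) : t.subst σ = t.subst σ' := by
  induction t with
  | fvar x => exact h x rfl
  | app f a ih =>
    simp only [Tm.subst]
    congr 1
    funext i
    exact ih i fun x hx => h x (Set.mem_iUnion.mpr ⟨i, hx⟩)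

lemma Tm.subst_fvar (t : Tm F far) : t.subst Tm.fvar = t := by
  induction t with
  | fvar x => rfl
  | app f a ih => simp only [Tm.subst]; congr 1; funext i; exact ih i

lemma Tm.fv_subst_subset {σ : ℕ → Tm F far} {S : Set ℕ}
    (hσ : ∀ x, (σ x).fv ⊆ S) (t : Tm F far) : (t.subst σ).fv ⊆ S := by
  induction t with
  | fvar x => exact hσ x
  | app f a ih =>
    intro y hy
    obtain ⟨i, hi⟩ := Set.mem_iUnion.mp hy
    exact ih i hi

/- ### Tmc-level lemmas -/

lemma Tmc.fv_toTmc {n : ℕ} (t : Tm F far) : (t.toTmc : Tmc F far n).fv = t.fv := by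
  induction t with
  | fvar x => rfl
  | app f a ih =>
    simp only [Tm.toTmc, Tmc.fv, Tm.fv]
    exact Set.iUnion_congr ih

lemma Tmc.substFv_toTmc {n : ℕ} (σ : ℕ → Tm F far) (t : Tm F far) :
    (t.toTmc : Tmc F far n).substFv σ = (t.subst σ).toTmc := by
  induction t with
  | fvar x => rfl
  | app f a ih =>
    simp only [Tm.toTmc, Tmc.substFv, Tm.subst]
    congr 1
    funext i
    exact ih i

lemma Tmc.bsubst_toTmc {m k : ℕ} (θ : Fin m → Tmc F far k) (t : Tm F far) :
    (t.toTmc : Tmc F far m).bsubst θ = t.toTmc := by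
  induction t with
  | fvar x => rfl
  | app f a ih =>
    simp only [Tm.toTmc, Tmc.bsubst]
    congr 1
    funext i
    exact ih i

lemma Tmc.shift_toTmc {k : ℕ} (t : Tm F far) :
    (t.toTmc : Tmc F far k).shift = t.toTmc := by
  induction t with
  | fvar x => rfl
  | app f a ih =>
    simp only [Tm.toTmc, Tmc.shift]
    congr 1
    funext i
    exact ih i

lemma Tmc.substFv_congr {n : ℕ} {σ σ' : ℕ → Tm F far} {t : Tmc F far n}
    (h : ∀ x ∈ t.fv, σ x = σ' x) : t.substFv σ = t.substFv σ' := by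
  induction t with
  | fvar x => simp only [Tmc.substFv]; rw [h x rfl]
  | bvar i => rfl
  | app f a ih =>
    simp only [Tmc.substFv]
    congr 1
    funext i
    exact ih i fun x hx => h x (Set.mem_iUnion.mpr ⟨i, hx⟩)

lemma Tmc.substFv_fvar {n : ℕ} (t : Tmc F far n) : t.substFv Tm.fvar = t := by
  induction t with
  | fvar x => rfl
  | bvar i => rfl
  | app f a ih => simp only [Tmc.substFv]; congr 1; funext i; exact ih i

lemma Tmc.fv_substFv_subset {n : ℕ} {σ : ℕ → Tm F far} {S : Set ℕ}
    (hσ : ∀ x, (σ x).fv ⊆ S) (t : Tmc F far n) : (t.substFv σ).fv ⊆ S := by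
  induction t with
  | fvar x => rw [Tmc.substFv, Tmc.fv_toTmc]; exact hσ x
  | bvar i => intro y hy; exact absurd hy (by simp [Tmc.substFv, Tmc.fv])
  | app f a ih =>
    intro y hy
    obtain ⟨i, hi⟩ := Set.mem_iUnion.mp hy
    exact ih i hi

lemma Tmc.substFv_bsubst {m k : ℕ} (σ : ℕ → Tm F far) (θ : Fin m → Tmc F far k)
    (t : Tmc F far m) :
    (t.bsubst θ).substFv σ = (t.substFv σ).bsubst (fun i => (θ i).substFv σ) := by
  induction t with
  | fvar x =>
    simp only [Tmc.bsubst, Tmc.substFv]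
    exact (Tmc.bsubst_toTmc _ _).symm
  | bvar i => rfl
  | app f a ih =>
    simp only [Tmc.bsubst, Tmc.substFv]
    congr 1
    funext i
    exact ih i

lemma Tmc.shift_substFv {k : ℕ} (σ : ℕ → Tm F far) (t : Tmc F far k) :
    (t.shift).substFv σ = (t.substFv σ).shift := by
  induction t with
  | fvar x => simp only [Tmc.shift, Tmc.substFv]; exact (Tmc.shift_toTmc _).symm
  | bvar i => rfl
  | app f a ih =>
    simp only [Tmc.shift, Tmc.substFv]
    congr 1
    funext i
    exact ih i

lemma Tmc.bsubst_bsubst {m k l : ℕ} (θ : Fin m → Tmc F far k)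
    (θ' : Fin k → Tmc F far l) (t : Tmc F far m) :
    (t.bsubst θ).bsubst θ' = t.bsubst (fun i => (θ i).bsubst θ') := by
  induction t with
  | fvar x => rfl
  | bvar i => rfl
  | app f a ih =>
    simp only [Tmc.bsubst]
    congr 1
    funext i
    exact ih i

lemma Tmc.shift_bsubst {k l : ℕ} (θ : Fin (k + 1) → Tmc F far l) (t : Tmc F far k) :
    (t.shift).bsubst θ = t.bsubst (fun i => θ i.castSucc) := by
  induction t with
  | fvar x => rfl
  | bvar i => rfl
  | app f a ih =>
    simp only [Tmc.shift, Tmc.bsubst]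
    congr 1
    funext i
    exact ih i

lemma Tmc.bsubst_shift {m k : ℕ} (θ : Fin m → Tmc F far k) (t : Tmc F far m) :
    (t.bsubst θ).shift = t.bsubst (fun i => (θ i).shift) := by
  induction t with
  | fvar x => rfl
  | bvar i => rfl
  | app f a ih =>
    simp only [Tmc.bsubst, Tmc.shift]
    congr 1
    funext i
    exact ih i

lemma Tmc.fv_bsubst_subset {m k : ℕ} (θ : Fin m → Tmc F far k) (t : Tmc F far m) :
    (t.bsubst θ).fv ⊆ t.fv ∪ ⋃ i, (θ i).fv := by
  induction t with
  | fvar x => intro y hy; exact Or.inl hy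
  | bvar i => intro y hy; exact Or.inr (Set.mem_iUnion.mpr ⟨i, hy⟩)
  | app f a ih =>
    intro y hy
    obtain ⟨i, hi⟩ := Set.mem_iUnion.mp hy
    rcases ih i hi with h | h
    · exact Or.inl (Set.mem_iUnion.mpr ⟨i, h⟩)
    · exact Or.inr h

lemma Tmc.fv_shift {k : ℕ} (t : Tmc F far k) : t.shift.fv = t.fv := by
  induction t with
  | fvar x => rfl
  | bvar i => rfl
  | app f a ih => simp only [Tmc.shift, Tmc.fv]; exact Set.iUnion_congr ih

lemma Tmc.noFvar_fv {n : ℕ} {t : Tmc F far n} (h : t.noFvar) : t.fv = ∅ := by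
  induction t with
  | fvar x => exact absurd h id
  | bvar i => rfl
  | app f a ih =>
    simp only [Tmc.fv]
    exact Set.iUnion_eq_empty.mpr fun i => ih i (h i)

lemma Tmc.bsubst_toTmc_eval {m k : ℕ} (μ : Fin m → Tm F far) (t : Tmc F far m) :
    t.bsubst (fun i => ((μ i).toTmc : Tmc F far k)) = (t.eval Tm.fvar μ).toTmc := by
  induction t with
  | fvar x => rfl
  | bvar i => rfl
  | app f a ih =>
    simp only [Tmc.bsubst, Tmc.eval, Tm.toTmc]
    congr 1
    funext i
    exact ih i

lemma Tmc.substFv_substFv {n : ℕ} (σ σ' : ℕ → Tm F far) (t : Tmc F far n) :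
    (t.substFv σ).substFv σ' = t.substFv (fun x => (σ x).subst σ') := by
  induction t with
  | fvar x => simp only [Tmc.substFv]; exact Tmc.substFv_toTmc _ _
  | bvar i => rfl
  | app f a ih =>
    simp only [Tmc.substFv]
    congr 1
    funext i
    exact ih i

/- ### Fml-level lemmas -/

lemma Fml.substFv_congr : ∀ {n : ℕ} {φ : Fml F far R rar n} {σ σ' : ℕ → Tm F far},
    (∀ x ∈ φ.fv, σ x = σ' x) → φ.substFv σ = φ.substFv σ'
  | _, .atom r ts, σ, σ', h => by
    simp only [Fml.substFv]
    congr 1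
    funext i
    exact Tmc.substFv_congr fun x hx => h x (Set.mem_iUnion.mpr ⟨i, hx⟩)
  | _, .eq s t, σ, σ', h => by
    simp only [Fml.substFv]
    rw [Tmc.substFv_congr fun x hx => h x (Or.inl hx),
      Tmc.substFv_congr fun x hx => h x (Or.inr hx)]
  | _, .top, _, _, _ => rfl
  | _, .bot, _, _, _ => rfl
  | _, .conj φ ψ, σ, σ', h => by
    simp only [Fml.substFv]
    rw [Fml.substFv_congr fun x hx => h x (Or.inl hx),
      Fml.substFv_congr fun x hx => h x (Or.inr hx)]
  | _, .disj I f, σ, σ', h => by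
    simp only [Fml.substFv]
    congr 1
    funext i
    exact Fml.substFv_congr fun x hx => h x (Set.mem_iUnion.mpr ⟨i, hx⟩)
  | _, .imp φ ψ, σ, σ', h => by
    simp only [Fml.substFv]
    rw [Fml.substFv_congr fun x hx => h x (Or.inl hx),
      Fml.substFv_congr fun x hx => h x (Or.inr hx)]
  | _, .all φ, σ, σ', h => by
    simp only [Fml.substFv]
    rw [Fml.substFv_congr (φ := φ) h]
  | _, .ex φ, σ, σ', h => by
    simp only [Fml.substFv]
    rw [Fml.substFv_congr (φ := φ) h]

lemma Fml.substFv_fvar : ∀ {n : ℕ} (φ : Fml F far R rar n), φ.substFv Tm.fvar = φ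
  | _, .atom r ts => by
    simp only [Fml.substFv]
    congr 1
    funext i
    exact Tmc.substFv_fvar _
  | _, .eq s t => by simp only [Fml.substFv]; rw [Tmc.substFv_fvar, Tmc.substFv_fvar]
  | _, .top => rfl
  | _, .bot => rfl
  | _, .conj φ ψ => by
    simp only [Fml.substFv]; rw [Fml.substFv_fvar φ, Fml.substFv_fvar ψ]
  | _, .disj I f => by
    simp only [Fml.substFv]
    congr 1
    funext i
    exact Fml.substFv_fvar _
  | _, .imp φ ψ => by
    simp only [Fml.substFv]; rw [Fml.substFv_fvar φ, Fml.substFv_fvar ψ]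
  | _, .all φ => by simp only [Fml.substFv]; rw [Fml.substFv_fvar φ]
  | _, .ex φ => by simp only [Fml.substFv]; rw [Fml.substFv_fvar φ]

/-- substFv is the identity on formulas whose free variables are fixed by σ. -/
lemma Fml.substFv_eq_self {n : ℕ} {φ : Fml F far R rar n} {σ : ℕ → Tm F far}
    (h : ∀ x ∈ φ.fv, σ x = Tm.fvar x) : φ.substFv σ = φ := by
  rw [Fml.substFv_congr h, Fml.substFv_fvar]

lemma Fml.fv_substFv_subset : ∀ {n : ℕ} (φ : Fml F far R rar n) {σ : ℕ → Tm F far}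
    {S : Set ℕ}, (∀ x, (σ x).fv ⊆ S) → (φ.substFv σ).fv ⊆ S
  | _, .atom r ts, σ, S, hσ => by
    intro y hy
    obtain ⟨i, hi⟩ := Set.mem_iUnion.mp hy
    exact Tmc.fv_substFv_subset hσ _ hi
  | _, .eq s t, σ, S, hσ => by
    rintro y (hy | hy)
    · exact Tmc.fv_substFv_subset hσ _ hy
    · exact Tmc.fv_substFv_subset hσ _ hy
  | _, .top, _, _, _ => by intro y hy; exact absurd hy (by simp [Fml.substFv, Fml.fv])
  | _, .bot, _, _, _ => by intro y hy; exact absurd hy (by simp [Fml.substFv, Fml.fv])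
  | _, .conj φ ψ, σ, S, hσ => by
    rintro y (hy | hy)
    · exact Fml.fv_substFv_subset φ hσ hy
    · exact Fml.fv_substFv_subset ψ hσ hy
  | _, .disj I f, σ, S, hσ => by
    intro y hy
    obtain ⟨i, hi⟩ := Set.mem_iUnion.mp hy
    exact Fml.fv_substFv_subset (f i) hσ hi
  | _, .imp φ ψ, σ, S, hσ => by
    rintro y (hy | hy)
    · exact Fml.fv_substFv_subset φ hσ hy
    · exact Fml.fv_substFv_subset ψ hσ hy
  | _, .all φ, σ, S, hσ => Fml.fv_substFv_subset φ hσ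
  | _, .ex φ, σ, S, hσ => Fml.fv_substFv_subset φ hσ

lemma extendB_substFv {m k : ℕ} (σ : ℕ → Tm F far) (θ : Fin m → Tmc F far k) :
    (fun i => (extendB θ i).substFv σ) = extendB (fun i => (θ i).substFv σ) := by
  funext i
  induction i using Fin.lastCases with
  | last => simp [extendB, Tmc.substFv]
  | cast i => simp [extendB, Tmc.shift_substFv]

lemma Fml.substFv_bsubst : ∀ {m k : ℕ} (σ : ℕ → Tm F far) (θ : Fin m → Tmc F far k)
    (φ : Fml F far R rar m),
    (φ.bsubst θ).substFv σ = (φ.substFv σ).bsubst (fun i => (θ i).substFv σ)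
  | _, _, σ, θ, .atom r ts => by
    simp only [Fml.bsubst, Fml.substFv]
    congr 1
    funext i
    exact Tmc.substFv_bsubst σ θ _
  | _, _, σ, θ, .eq s t => by
    simp only [Fml.bsubst, Fml.substFv]
    rw [Tmc.substFv_bsubst, Tmc.substFv_bsubst]
  | _, _, _, _, .top => rfl
  | _, _, _, _, .bot => rfl
  | _, _, σ, θ, .conj φ ψ => by
    simp only [Fml.bsubst, Fml.substFv]
    rw [Fml.substFv_bsubst σ θ φ, Fml.substFv_bsubst σ θ ψ]
  | _, _, σ, θ, .disj I f => by
    simp only [Fml.bsubst, Fml.substFv]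
    congr 1
    funext i
    exact Fml.substFv_bsubst σ θ (f i)
  | _, _, σ, θ, .imp φ ψ => by
    simp only [Fml.bsubst, Fml.substFv]
    rw [Fml.substFv_bsubst σ θ φ, Fml.substFv_bsubst σ θ ψ]
  | _, _, σ, θ, .all φ => by
    simp only [Fml.bsubst, Fml.substFv]
    rw [Fml.substFv_bsubst σ (extendB θ) φ, extendB_substFv]
  | _, _, σ, θ, .ex φ => by
    simp only [Fml.bsubst, Fml.substFv]
    rw [Fml.substFv_bsubst σ (extendB θ) φ, extendB_substFv]

lemma extendB_bsubst {m k l : ℕ} (θ : Fin m → Tmc F far k) (θ' : Fin k → Tmc F far l) :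
    (fun i => (extendB θ i).bsubst (extendB θ')) = extendB (fun i => (θ i).bsubst θ') := by
  funext i
  induction i using Fin.lastCases with
  | last => simp [extendB, Tmc.bsubst]
  | cast i =>
    simp only [extendB, Fin.snoc_castSucc]
    rw [Tmc.shift_bsubst, Tmc.bsubst_shift]
    congr 1
    funext j
    simp [extendB]

lemma Fml.bsubst_bsubst : ∀ {m k l : ℕ} (θ : Fin m → Tmc F far k)
    (θ' : Fin k → Tmc F far l) (φ : Fml F far R rar m),
    (φ.bsubst θ).bsubst θ' = φ.bsubst (fun i => (θ i).bsubst θ')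
  | _, _, _, θ, θ', .atom r ts => by
    simp only [Fml.bsubst]
    congr 1
    funext i
    exact Tmc.bsubst_bsubst θ θ' _
  | _, _, _, θ, θ', .eq s t => by
    simp only [Fml.bsubst]
    rw [Tmc.bsubst_bsubst, Tmc.bsubst_bsubst]
  | _, _, _, _, _, .top => rfl
  | _, _, _, _, _, .bot => rfl
  | _, _, _, θ, θ', .conj φ ψ => by
    simp only [Fml.bsubst]
    rw [Fml.bsubst_bsubst θ θ' φ, Fml.bsubst_bsubst θ θ' ψ]
  | _, _, _, θ, θ', .disj I f => by
    simp only [Fml.bsubst]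
    congr 1
    funext i
    exact Fml.bsubst_bsubst θ θ' (f i)
  | _, _, _, θ, θ', .imp φ ψ => by
    simp only [Fml.bsubst]
    rw [Fml.bsubst_bsubst θ θ' φ, Fml.bsubst_bsubst θ θ' ψ]
  | _, _, _, θ, θ', .all φ => by
    simp only [Fml.bsubst]
    rw [Fml.bsubst_bsubst (extendB θ) (extendB θ') φ, extendB_bsubst]
  | _, _, _, θ, θ', .ex φ => by
    simp only [Fml.bsubst]
    rw [Fml.bsubst_bsubst (extendB θ) (extendB θ') φ, extendB_bsubst]

lemma Fml.fv_bsubst_subset : ∀ {m k : ℕ} (θ : Fin m → Tmc F far k)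
    (φ : Fml F far R rar m), (φ.bsubst θ).fv ⊆ φ.fv ∪ ⋃ i, (θ i).fv
  | _, _, θ, .atom r ts => by
    intro y hy
    obtain ⟨i, hi⟩ := Set.mem_iUnion.mp hy
    rcases Tmc.fv_bsubst_subset θ _ hi with h | h
    · exact Or.inl (Set.mem_iUnion.mpr ⟨i, h⟩)
    · exact Or.inr h
  | _, _, θ, .eq s t => by
    rintro y (hy | hy)
    · rcases Tmc.fv_bsubst_subset θ _ hy with h | h
      · exact Or.inl (Or.inl h)
      · exact Or.inr h
    · rcases Tmc.fv_bsubst_subset θ _ hy with h | h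
      · exact Or.inl (Or.inr h)
      · exact Or.inr h
  | _, _, θ, .top => by intro y hy; exact absurd hy (by simp [Fml.bsubst, Fml.fv])
  | _, _, θ, .bot => by intro y hy; exact absurd hy (by simp [Fml.bsubst, Fml.fv])
  | _, _, θ, .conj φ ψ => by
    rintro y (hy | hy)
    · rcases Fml.fv_bsubst_subset θ φ hy with h | h
      · exact Or.inl (Or.inl h)
      · exact Or.inr h
    · rcases Fml.fv_bsubst_subset θ ψ hy with h | h
      · exact Or.inl (Or.inr h)
      · exact Or.inr h
  | _, _, θ, .disj I f => by
    intro y hy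
    obtain ⟨i, hi⟩ := Set.mem_iUnion.mp hy
    rcases Fml.fv_bsubst_subset θ (f i) hi with h | h
    · exact Or.inl (Set.mem_iUnion.mpr ⟨i, h⟩)
    · exact Or.inr h
  | _, _, θ, .imp φ ψ => by
    rintro y (hy | hy)
    · rcases Fml.fv_bsubst_subset θ φ hy with h | h
      · exact Or.inl (Or.inl h)
      · exact Or.inr h
    · rcases Fml.fv_bsubst_subset θ ψ hy with h | h
      · exact Or.inl (Or.inr h)
      · exact Or.inr h
  | _, _, θ, .all φ => by
    intro y hy
    rcases Fml.fv_bsubst_subset (extendB θ) φ hy with h | h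
    · exact Or.inl h
    · obtain ⟨i, hi⟩ := Set.mem_iUnion.mp h
      refine Or.inr ?_
      induction i using Fin.lastCases with
      | last => exact absurd hi (by simp [extendB, Tmc.fv])
      | cast i =>
        rw [extendB, Fin.snoc_castSucc, Tmc.fv_shift] at hi
        exact Set.mem_iUnion.mpr ⟨i, hi⟩
  | _, _, θ, .ex φ => by
    intro y hy
    rcases Fml.fv_bsubst_subset (extendB θ) φ hy with h | h
    · exact Or.inl h
    · obtain ⟨i, hi⟩ := Set.mem_iUnion.mp h
      refine Or.inr ?_
      induction i using Fin.lastCases with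
      | last => exact absurd hi (by simp [extendB, Tmc.fv])
      | cast i =>
        rw [extendB, Fin.snoc_castSucc, Tmc.fv_shift] at hi
        exact Set.mem_iUnion.mpr ⟨i, hi⟩

lemma Tmc.bsubst_bvar {m : ℕ} (t : Tmc F far m) :
    t.bsubst (fun i => .bvar i) = t := by
  induction t with
  | fvar x => rfl
  | bvar i => rfl
  | app f a ih => simp only [Tmc.bsubst]; congr 1; funext j; exact ih j

lemma extendB_bvar {m : ℕ} :
    extendB (fun i : Fin m => (.bvar i : Tmc F far m)) = fun i => .bvar i := by
  funext i
  induction i using Fin.lastCases with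
  | last => simp [extendB]
  | cast i => simp [extendB, Tmc.shift]

lemma Fml.bsubst_id : ∀ {m : ℕ} (φ : Fml F far R rar m),
    φ.bsubst (fun i => .bvar i) = φ
  | _, .atom r ts => by
    simp only [Fml.bsubst]
    congr 1
    funext i
    exact Tmc.bsubst_bvar _
  | _, .eq s t => by
    simp only [Fml.bsubst]
    rw [Tmc.bsubst_bvar, Tmc.bsubst_bvar]
  | _, .top => rfl
  | _, .bot => rfl
  | _, .conj φ ψ => by
    simp only [Fml.bsubst]; rw [Fml.bsubst_id φ, Fml.bsubst_id ψ]
  | _, .disj I f => by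
    simp only [Fml.bsubst]
    congr 1
    funext i
    exact Fml.bsubst_id (f i)
  | _, .imp φ ψ => by
    simp only [Fml.bsubst]; rw [Fml.bsubst_id φ, Fml.bsubst_id ψ]
  | _, .all φ => by
    simp only [Fml.bsubst]; rw [extendB_bvar, Fml.bsubst_id φ]
  | _, .ex φ => by
    simp only [Fml.bsubst]; rw [extendB_bvar, Fml.bsubst_id φ]

lemma Fml.open0_substFv (σ : ℕ → Tm F far) (t : Tm F far) (φ : Fml F far R rar 1) :
    (Fml.open0 t φ).substFv σ = Fml.open0 (t.subst σ) (φ.substFv σ) := by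
  unfold Fml.open0
  rw [Fml.substFv_bsubst]
  congr 1
  funext i
  exact Tmc.substFv_toTmc σ t

lemma Fml.substFv_substFv (σ σ' : ℕ → Tm F far) {n : ℕ} (φ : Fml F far R rar n) :
    (φ.substFv σ).substFv σ' = φ.substFv (fun x => (σ x).subst σ') := by
  induction φ with
  | atom r ts =>
    simp only [Fml.substFv]
    congr 1
    funext i
    exact Tmc.substFv_substFv σ σ' _
  | eq s t => simp only [Fml.substFv]; rw [Tmc.substFv_substFv, Tmc.substFv_substFv]
  | top => rfl
  | bot => rfl
  | conj φ ψ ihφ ihψ => simp only [Fml.substFv]; rw [ihφ, ihψ]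
  | disj I f ih =>
    simp only [Fml.substFv]
    congr 1
    funext i
    exact ih i
  | imp φ ψ ihφ ihψ => simp only [Fml.substFv]; rw [ihφ, ihψ]
  | all φ ih => simp only [Fml.substFv]; rw [ih]
  | ex φ ih => simp only [Fml.substFv]; rw [ih]

/- ### Free variables of axioms-as-formulas -/

lemma Fml.fv_alls : ∀ (m : ℕ) (φ : Fml F far R rar m), (Fml.alls m φ).fv = φ.fv
  | 0, φ => rfl
  | m + 1, φ => by
    show (Fml.alls m (.all φ)).fv = φ.fv
    rw [Fml.fv_alls m (.all φ)]
    rfl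

lemma Fml.fv_exs : ∀ (k : ℕ) {m : ℕ} (φ : Fml F far R rar (m + k)),
    (Fml.exs k φ).fv = φ.fv
  | 0, _, φ => rfl
  | k + 1, m, φ => by
    show (Fml.exs k (.ex φ)).fv = φ.fv
    rw [Fml.fv_exs k (.ex φ)]
    rfl

lemma listConj_fv {n : ℕ} : ∀ (l : List (CAtom F far R rar n))
    (_ : ∀ a ∈ l, ∀ i, (a.2 i).noFvar), (listConj l).fv = ∅
  | [], _ => rfl
  | a :: l, h => by
    show ((Fml.atom a.1 a.2).fv ∪ (listConj l).fv) = ∅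
    rw [listConj_fv l fun b hb => h b (List.mem_cons_of_mem _ hb)]
    rw [Set.union_empty]
    exact Set.iUnion_eq_empty.mpr fun i => Tmc.noFvar_fv (h a (List.mem_cons_self) i)

lemma CohAx.fv_toFml (ax : CohAx F far R rar) : ax.toFml.fv = ∅ := by
  unfold CohAx.toFml
  rw [Fml.fv_alls]
  show (listConj ax.hyp).fv ∪ _ = ∅
  rw [listConj_fv ax.hyp ax.hypClosed, Set.empty_union]
  show (⋃ i, (Fml.exs _ _).fv) = ∅
  refine Set.iUnion_eq_empty.mpr fun i => ?_
  rw [Fml.fv_exs]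
  exact listConj_fv _ fun a ha j =>
    ax.conclClosed _ (ax.concl.get_mem i) a ha j

lemma atomF_fv (a : Atom F far R rar) : (atomF a).fv = Atom.fv a := by
  show (⋃ i, ((a.2 i).toTmc : Tmc F far 0).fv) = _
  unfold Atom.fv
  exact Set.iUnion_congr fun i => Tmc.fv_toTmc _

lemma atomF_substFv (σ : ℕ → Tm F far) (a : Atom F far R rar) :
    (atomF a).substFv σ = atomF (Atom.subst σ a) := by
  show Fml.atom a.1 (fun i => ((a.2 i).toTmc).substFv σ) = _
  unfold atomF Atom.subst
  congr 1
  funext i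
  exact Tmc.substFv_toTmc σ _

lemma Atom.subst_congr {σ σ' : ℕ → Tm F far} {a : Atom F far R rar}
    (h : ∀ x ∈ Atom.fv a, σ x = σ' x) : Atom.subst σ a = Atom.subst σ' a := by
  unfold Atom.subst
  congr 1
  funext i
  exact Tm.subst_congr fun x hx => h x (Set.mem_iUnion.mpr ⟨i, hx⟩)

lemma Atom.subst_fvar (a : Atom F far R rar) : Atom.subst Tm.fvar a = a := by
  unfold Atom.subst
  cases a with
  | mk r ts =>
    congr 1
    funext i
    exact Tm.subst_fvar _

/- ### Monotonicity of provability in the context -/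

lemma Prv.mono {em : Prop} {X : Finset ℕ} {Γ : Set (Fml F far R rar 0)}
    {φ : Fml F far R rar 0} (h : Prv em X Γ φ) :
    ∀ Γ' : Set (Fml F far R rar 0), Γ ⊆ Γ' →
      (∀ χ ∈ Γ', χ ∈ Γ ∨ Fml.fv χ ⊆ ↑X) → Prv em X Γ' φ := by
  induction h with
  | ax h => exact fun Γ' hsub _ => .ax (hsub h)
  | topI => exact fun _ _ _ => .topI
  | botE _ ih => exact fun Γ' hsub hc => .botE (ih Γ' hsub hc)
  | conjI _ _ ih1 ih2 => exact fun Γ' hsub hc => .conjI (ih1 Γ' hsub hc) (ih2 Γ' hsub hc)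
  | conjE1 _ ih => exact fun Γ' hsub hc => .conjE1 (ih Γ' hsub hc)
  | conjE2 _ ih => exact fun Γ' hsub hc => .conjE2 (ih Γ' hsub hc)
  | disjI i _ ih => exact fun Γ' hsub hc => .disjI i (ih Γ' hsub hc)
  | disjE _ _ ih1 ih2 =>
    intro Γ' hsub hc
    refine .disjE (ih1 Γ' hsub hc) fun i => ih2 i _ (Set.insert_subset_insert hsub) ?_
    rintro χ (rfl | hχ)
    · exact Or.inl (Set.mem_insert _ _)
    · rcases hc χ hχ with h | h
      · exact Or.inl (Set.mem_insert_of_mem _ h)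
      · exact Or.inr h
  | impI _ ih =>
    intro Γ' hsub hc
    refine .impI (ih _ (Set.insert_subset_insert hsub) ?_)
    rintro χ (rfl | hχ)
    · exact Or.inl (Set.mem_insert _ _)
    · rcases hc χ hχ with h | h
      · exact Or.inl (Set.mem_insert_of_mem _ h)
      · exact Or.inr h
  | impE _ _ ih1 ih2 => exact fun Γ' hsub hc => .impE (ih1 Γ' hsub hc) (ih2 Γ' hsub hc)
  | @allI X Γ φ x hx hφ hΓ _ ih =>
    intro Γ' hsub hc
    refine .allI x hx hφ ?_ (ih Γ' hsub ?_)
    · intro ψ hψ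
      rcases hc ψ hψ with h | h
      · exact hΓ ψ h
      · exact fun hmem => hx (h hmem)
    · intro χ hχ
      rcases hc χ hχ with h | h
      · exact Or.inl h
      · exact Or.inr (h.trans (by intro y hy; exact Finset.mem_insert_of_mem hy))
  | allE t ht _ ih => exact fun Γ' hsub hc => .allE t ht (ih Γ' hsub hc)
  | exI t ht _ ih => exact fun Γ' hsub hc => .exI t ht (ih Γ' hsub hc)
  | @exE X Γ φ ψ x hx hφ hψ hΓ _ _ ih1 ih2 =>
    intro Γ' hsub hc
    refine .exE x hx hφ hψ ?_ (ih1 Γ' hsub hc) (ih2 _ (Set.insert_subset_insert hsub) ?_)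
    · intro χ hχ
      rcases hc χ hχ with h | h
      · exact hΓ χ h
      · exact fun hmem => hx (h hmem)
    · rintro χ (rfl | hχ)
      · exact Or.inl (Set.mem_insert _ _)
      · rcases hc χ hχ with h | h
        · exact Or.inl (Set.mem_insert_of_mem _ h)
        · exact Or.inr (h.trans (by intro y hy; exact Finset.mem_insert_of_mem hy))
  | em φ h => exact fun _ _ _ => .em φ h

/-- Monotonicity in the simple form: all formulas of the bigger context have free
variables in X. -/
lemma Prv.mono' {em : Prop} {X : Finset ℕ} {Γ Γ' : Set (Fml F far R rar 0)}
    {φ : Fml F far R rar 0} (h : Prv em X Γ φ) (hsub : Γ ⊆ Γ')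
    (hc : ∀ χ ∈ Γ', Fml.fv χ ⊆ ↑X) : Prv em X Γ' φ :=
  h.mono Γ' hsub fun χ hχ => Or.inr (hc χ hχ)

/- ### The substitution lemma for provability -/

lemma Prv.substFv {em : Prop} {X : Finset ℕ} {Γ : Set (Fml F far R rar 0)}
    {φ : Fml F far R rar 0} (h : Prv em X Γ φ) :
    ∀ (σ : ℕ → Tm F far) (X' : Finset ℕ), (∀ x, (σ x).fv ⊆ ↑X') →
      Prv em X' (Fml.substFv σ '' Γ) (φ.substFv σ) := by
  induction h with
  | ax h => exact fun σ X' hσ => .ax (Set.mem_image_of_mem _ h)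
  | topI => exact fun _ _ _ => .topI
  | botE _ ih => exact fun σ X' hσ => .botE (ih σ X' hσ)
  | conjI _ _ ih1 ih2 => exact fun σ X' hσ => .conjI (ih1 σ X' hσ) (ih2 σ X' hσ)
  | conjE1 _ ih => exact fun σ X' hσ => .conjE1 (ih σ X' hσ)
  | conjE2 _ ih => exact fun σ X' hσ => .conjE2 (ih σ X' hσ)
  | disjI i _ ih => exact fun σ X' hσ => .disjI i (ih σ X' hσ)
  | disjE _ _ ih1 ih2 =>
    intro σ X' hσ
    refine .disjE (ih1 σ X' hσ) fun i => ?_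
    have := ih2 i σ X' hσ
    rwa [Set.image_insert_eq] at this
  | impI _ ih =>
    intro σ X' hσ
    refine .impI ?_
    have := ih σ X' hσ
    rwa [Set.image_insert_eq] at this
  | impE _ _ ih1 ih2 => exact fun σ X' hσ => .impE (ih1 σ X' hσ) (ih2 σ X' hσ)
  | @allI X Γ φ x hx hφ hΓ _ ih =>
    intro σ X' hσ
    obtain ⟨x', hx'⟩ := Infinite.exists_notMem_finset X'
    have hσ' : ∀ y, ((Function.update σ x (Tm.fvar x')) y).fv ⊆ ↑(insert x' X') := by
      intro y
      by_cases hy : y = x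
      · subst hy
        rw [Function.update_self]
        intro z hz
        rcases hz with rfl
        exact Finset.mem_insert_self _ _
      · rw [Function.update_of_ne hy]
        exact (hσ y).trans (Finset.coe_subset.mpr (Finset.subset_insert _ _))
    have key := ih (Function.update σ x (Tm.fvar x')) (insert x' X') hσ'
    have himg : Fml.substFv (Function.update σ x (Tm.fvar x')) '' Γ
        = Fml.substFv σ '' Γ := by
      refine Set.image_congr fun γ hγ => ?_
      exact Fml.substFv_congr fun y hy =>
        Function.update_of_ne (by rintro rfl; exact hΓ γ hγ hy) _ _
    have hfml : Fml.substFv (Function.update σ x (Tm.fvar x')) (Fml.open0 (.fvar x) φ)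
        = Fml.open0 (.fvar x') (φ.substFv σ) := by
      rw [Fml.open0_substFv]
      have h1 : (Tm.fvar x).subst (Function.update σ x (Tm.fvar x')) = Tm.fvar x' := by
        show Function.update σ x (Tm.fvar x') x = _
        rw [Function.update_self]
      rw [h1]
      congr 1
      exact Fml.substFv_congr fun y hy =>
        Function.update_of_ne (by rintro rfl; exact hφ hy) _ _
    rw [himg, hfml] at key
    refine .allI x' hx' ?_ ?_ key
    · exact fun hmem => hx' (Fml.fv_substFv_subset φ hσ hmem)
    · rintro χ ⟨γ, hγ, rfl⟩
      exact fun hmem => hx' (Fml.fv_substFv_subset γ hσ hmem)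
  | allE t ht _ ih =>
    intro σ X' hσ
    have := Prv.allE (t.subst σ) (Tm.fv_subst_subset hσ t) (ih σ X' hσ)
    rwa [← Fml.open0_substFv] at this
  | exI t ht _ ih =>
    intro σ X' hσ
    refine Prv.exI (t.subst σ) (Tm.fv_subst_subset hσ t) ?_
    rw [← Fml.open0_substFv]
    exact ih σ X' hσ
  | @exE X Γ φ ψ x hx hφ hψ hΓ _ _ ih1 ih2 =>
    intro σ X' hσ
    obtain ⟨x', hx'⟩ := Infinite.exists_notMem_finset X'
    have hσ' : ∀ y, ((Function.update σ x (Tm.fvar x')) y).fv ⊆ ↑(insert x' X') := by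
      intro y
      by_cases hy : y = x
      · subst hy
        rw [Function.update_self]
        intro z hz
        rcases hz with rfl
        exact Finset.mem_insert_self _ _
      · rw [Function.update_of_ne hy]
        exact (hσ y).trans (Finset.coe_subset.mpr (Finset.subset_insert _ _))
    have key := ih2 (Function.update σ x (Tm.fvar x')) (insert x' X') hσ'
    have himg : Fml.substFv (Function.update σ x (Tm.fvar x')) '' Γ
        = Fml.substFv σ '' Γ := by
      refine Set.image_congr fun γ hγ => ?_
      exact Fml.substFv_congr fun y hy =>
        Function.update_of_ne (by rintro rfl; exact hΓ γ hγ hy) _ _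
    have hfml : Fml.substFv (Function.update σ x (Tm.fvar x')) (Fml.open0 (.fvar x) φ)
        = Fml.open0 (.fvar x') (φ.substFv σ) := by
      rw [Fml.open0_substFv]
      have h1 : (Tm.fvar x).subst (Function.update σ x (Tm.fvar x')) = Tm.fvar x' := by
        show Function.update σ x (Tm.fvar x') x = _
        rw [Function.update_self]
      rw [h1]
      congr 1
      exact Fml.substFv_congr fun y hy =>
        Function.update_of_ne (by rintro rfl; exact hφ hy) _ _
    have hpsi : Fml.substFv (Function.update σ x (Tm.fvar x')) ψ = ψ.substFv σ :=
      Fml.substFv_congr fun y hy =>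
        Function.update_of_ne (by rintro rfl; exact hψ hy) _ _
    rw [Set.image_insert_eq, himg, hfml, hpsi] at key
    refine .exE x' hx' ?_ ?_ ?_ (ih1 σ X' hσ) key
    · exact fun hmem => hx' (Fml.fv_substFv_subset φ hσ hmem)
    · exact fun hmem => hx' (Fml.fv_substFv_subset ψ hσ hmem)
    · rintro χ ⟨γ, hγ, rfl⟩
      exact fun hmem => hx' (Fml.fv_substFv_subset γ hσ hmem)
  | @em X Γ φ h =>
    intro σ X' hσ
    have : (Fml.disj Bool fun b => bif b then φ else φ.neg).substFv σ
        = Fml.disj Bool fun b => bif b then φ.substFv σ else (φ.substFv σ).neg := by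
      show Fml.disj Bool _ = _
      congr 1
      funext b
      cases b <;> rfl
    rw [this]
    exact .em _ h

/- ### Instantiating universal closures -/

lemma Prv.alls_inst {em : Prop} {X : Finset ℕ} {Γ : Set (Fml F far R rar 0)} :
    ∀ {m : ℕ} (φ : Fml F far R rar m) (θ : Fin m → Tm F far),
      (∀ i, (θ i).fv ⊆ ↑X) → Prv em X Γ (Fml.alls m φ) →
      Prv em X Γ (φ.bsubst fun i => (θ i).toTmc)
  | 0, φ, θ, hθ, h => by
    have e : (fun i : Fin 0 => ((θ i).toTmc : Tmc F far 0)) = fun i => .bvar i := by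
      funext i; exact i.elim0
    rw [e, Fml.bsubst_id]; exact h
  | m + 1, φ, θ, hθ, h => by
    have h1 := Prv.alls_inst (.all φ) (fun i => θ i.castSucc) (fun i => hθ _) h
    have e1 : (Fml.all φ).bsubst (fun i => ((θ i.castSucc).toTmc : Tmc F far 0))
        = .all (φ.bsubst (extendB fun i => (θ i.castSucc).toTmc)) := rfl
    rw [e1] at h1
    have h2 := Prv.allE (θ (Fin.last m)) (hθ _) h1
    have e2 : Fml.open0 (θ (Fin.last m))
          (φ.bsubst (extendB fun i => (θ i.castSucc).toTmc))
        = φ.bsubst fun i => (θ i).toTmc := by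
      unfold Fml.open0
      rw [Fml.bsubst_bsubst]
      congr 1
      funext i
      induction i using Fin.lastCases with
      | last => simp [extendB, Tmc.bsubst]
      | cast i =>
        simp only [extendB, Fin.snoc_castSucc]
        rw [Tmc.shift_toTmc, Tmc.bsubst_toTmc]
    rwa [e2] at h2

/- ### Iterated extension of de Bruijn substitutions and iterated existentials -/

def iterExtend : ∀ (k : ℕ) {m n : ℕ},
    (Fin m → Tmc F far n) → Fin (m + k) → Tmc F far (n + k)
  | 0, _, _, θ => θ
  | k + 1, _, _, θ => extendB (iterExtend k θ)

lemma Fml.exs_bsubst : ∀ (k : ℕ) {m n : ℕ} (θ : Fin m → Tmc F far n)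
    (L : Fml F far R rar (m + k)),
    (Fml.exs k L).bsubst θ = Fml.exs k (L.bsubst (iterExtend k θ))
  | 0, _, _, θ, L => rfl
  | k + 1, m, n, θ, L => by
    show (Fml.exs k (.ex L)).bsubst θ = _
    rw [Fml.exs_bsubst k θ (.ex L)]
    rfl

lemma iterExtend_fv : ∀ (k : ℕ) {m n : ℕ} (θ : Fin m → Tmc F far n) (S : Set ℕ),
    (∀ i, (θ i).fv ⊆ S) → ∀ j, (iterExtend k θ j).fv ⊆ S
  | 0, _, _, θ, S, hθ, j => hθ j
  | k + 1, m, n, θ, S, hθ, j => by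
    have e : iterExtend (k + 1) θ = extendB (iterExtend k θ) := rfl
    rw [e]
    induction j using Fin.lastCases with
    | last => simp [extendB, Tmc.fv]
    | cast i =>
      simp only [extendB, Fin.snoc_castSucc, Tmc.fv_shift]
      exact iterExtend_fv k θ S hθ i

lemma iterExtend_inst : ∀ (k : ℕ) {m : ℕ} (ι : Fin m → Tm F far)
    (w : Fin (0 + k) → Tm F far) (j : Fin (m + k)),
    (iterExtend k (fun i => ((ι i).toTmc : Tmc F far 0)) j).bsubst
        (fun i => ((w i).toTmc : Tmc F far 0))
      = ((Fin.append ι fun i : Fin k => w (Fin.cast (Nat.zero_add k).symm i)) j).toTmc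
  | 0, m, ι, w, j => by
    show ((ι j).toTmc : Tmc F far 0).bsubst _ = _
    rw [Tmc.bsubst_toTmc]
    congr 1
    exact (Fin.append_left ι _ j).symm
  | k + 1, m, ι, w, j => by
    have e0 : iterExtend (k + 1) (fun i => ((ι i).toTmc : Tmc F far 0))
        = extendB (iterExtend k (fun i => ((ι i).toTmc : Tmc F far 0))) := rfl
    rw [e0]
    have key : ∀ j' : Fin ((m + k) + 1),
        (extendB (iterExtend k (fun i => ((ι i).toTmc : Tmc F far 0))) j').bsubst
            (fun i => ((w i).toTmc : Tmc F far 0))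
          = ((Fin.append ι fun i : Fin (k + 1) =>
              w (Fin.cast (Nat.zero_add (k + 1)).symm i)) j').toTmc := by
      intro j'
      induction j' using Fin.lastCases with
      | last =>
        simp only [extendB, Fin.snoc_last]
        show (w (Fin.last (0 + k))).toTmc = _
        have e : (Fin.last (m + k) : Fin (m + (k + 1))) = Fin.natAdd m (Fin.last k) := by
          ext; simp
        rw [e, Fin.append_right]
        exact congrArg (fun z => (w z).toTmc) (Fin.ext (Nat.zero_add k))
      | cast j1 =>
        simp only [extendB, Fin.snoc_castSucc]
        rw [Tmc.shift_bsubst]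
        refine (iterExtend_inst k ι (fun i => w i.castSucc) j1).trans ?_
        congr 1
        refine j1.addCases (fun jl => ?_) (fun jr => ?_)
        · rw [Fin.append_left]
          have e : (Fin.castAdd k jl).castSucc = Fin.castAdd (k + 1) jl := by ext; simp
          rw [e, Fin.append_left]
        · rw [Fin.append_right]
          have e : (Fin.natAdd m jr).castSucc = Fin.natAdd m jr.castSucc := by ext; simp
          rw [e, Fin.append_right]
          exact congrArg w (Fin.ext rfl)
    exact key j

/- ### Iterated existential elimination with fresh variables -/

lemma exs_elim : ∀ (k : ℕ) (φ : Fml F far R rar (0 + k)) (X : Finset ℕ)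
    (Γ : Set (Fml F far R rar 0)) (ψ : Fml F far R rar 0) (v : Fin (0 + k) → ℕ),
    Function.Injective v → (∀ i, v i ∉ X) →
    Fml.fv φ ⊆ ↑X → Fml.fv ψ ⊆ ↑X → (∀ χ ∈ Γ, Fml.fv χ ⊆ ↑X) →
    Prv False X Γ (Fml.exs k φ) →
    Prv False (X ∪ Finset.image v Finset.univ)
      (insert (φ.bsubst fun i => .fvar (v i)) Γ) ψ →
    Prv False X Γ ψ
  | 0, φ, X, Γ, ψ, v, hinj, hvX, hφ, hψ, hΓ, G, H => by
    have e1 : (Finset.image v Finset.univ) = (∅ : Finset ℕ) := by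
      ext a
      simp only [Finset.mem_image, Finset.notMem_empty, iff_false, not_exists]
      rintro i -
      exact i.elim0
    have e2 : φ.bsubst (fun i => (.fvar (v i) : Tmc F far 0)) = φ := by
      have e : (fun i : Fin (0 + 0) => (.fvar (v i) : Tmc F far 0)) = fun i => .bvar i := by
        funext i; exact i.elim0
      rw [e, Fml.bsubst_id]
    rw [e1, Finset.union_empty, e2] at H
    exact Prv.impE (Prv.impI H) G
  | k + 1, φ, X, Γ, ψ, v, hinj, hvX, hφ, hψ, hΓ, G, H => by
    refine exs_elim k (.ex φ) X Γ ψ (fun i => v i.castSucc)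
      (fun i j hij => Fin.castSucc_injective _ (hinj hij)) (fun i => hvX _)
      hφ hψ hΓ G ?_
    set x := v (Fin.last (0 + k)) with hx
    set θ' : Fin (0 + k) → Tmc F far 0 := fun i => .fvar (v i.castSucc) with hθ'
    -- the opened ex-formula
    have hexF : ((Fml.ex φ).bsubst θ') = .ex (φ.bsubst (extendB θ')) := rfl
    -- free-variable bound for the body
    have hbody : (φ.bsubst (extendB θ')).fv
        ⊆ ↑X ∪ {y | ∃ i : Fin (0 + k), y = v i.castSucc} := by
      refine (Fml.fv_bsubst_subset _ _).trans ?_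
      refine Set.union_subset (hφ.trans (Set.subset_union_left)) ?_
      intro y hy
      obtain ⟨j, hj⟩ := Set.mem_iUnion.mp hy
      induction j using Fin.lastCases with
      | last => exact absurd hj (by simp [extendB, Tmc.fv])
      | cast i =>
        rw [extendB, Fin.snoc_castSucc, Tmc.fv_shift] at hj
        rcases hj with rfl
        exact Or.inr ⟨i, rfl⟩
    have hxfresh : ∀ y ∈ (↑X ∪ {y | ∃ i : Fin (0 + k), y = v i.castSucc} : Set ℕ),
        y ≠ x := by
      rintro y (hy | ⟨i, rfl⟩)
      · intro hyx; exact hvX _ (hyx ▸ hy)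
      · intro hyx
        exact absurd (hinj hyx) (Fin.ne_last_of_lt (Fin.castSucc_lt_last i))
    refine Prv.exE x ?_ ?_ ?_ ?_ (Prv.ax (Set.mem_insert _ _)) ?_
    · -- x ∉ X ∪ image (v ∘ castSucc)
      rw [Finset.mem_union]
      rintro (hmem | hmem)
      · exact hvX _ hmem
      · obtain ⟨i, -, hi⟩ := Finset.mem_image.mp hmem
        exact hxfresh _ (Or.inr ⟨i, hi.symm⟩) rfl
    · -- x not free in the ex-formula
      intro hmem
      exact hxfresh x (hbody hmem) rfl
    · exact fun hmem => hxfresh x (Or.inl (hψ hmem)) rfl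
    · -- x not free in the context
      rintro χ (rfl | hχ)
      · intro hmem
        exact hxfresh x (hbody hmem) rfl
      · exact fun hmem => hxfresh x (Or.inl (hΓ χ hχ hmem)) rfl
    · -- the main premise
      have e3 : Fml.open0 (.fvar x) (φ.bsubst (extendB θ'))
          = φ.bsubst fun i => .fvar (v i) := by
        unfold Fml.open0
        rw [Fml.bsubst_bsubst]
        congr 1
        funext j
        induction j using Fin.lastCases with
        | last => simp [extendB, Tmc.bsubst, Tm.toTmc, hx]
        | cast i => simp [extendB, hθ', Tmc.shift, Tmc.bsubst]
      have e4 : insert x (X ∪ Finset.image (fun i : Fin (0 + k) => v i.castSucc)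
            Finset.univ) = X ∪ Finset.image v Finset.univ := by
        ext a
        simp only [Finset.mem_insert, Finset.mem_union, Finset.mem_image,
          Finset.mem_univ, true_and]
        constructor
        · rintro (rfl | ha | ⟨i, rfl⟩)
          · exact Or.inr ⟨Fin.last _, hx.symm⟩
          · exact Or.inl ha
          · exact Or.inr ⟨i.castSucc, rfl⟩
        · rintro (ha | ⟨j, rfl⟩)
          · exact Or.inr (Or.inl ha)
          · induction j using Fin.lastCases with
            | last => exact Or.inl hx.symm
            | cast i => exact Or.inr (Or.inr ⟨i, rfl⟩)
      rw [e3, e4]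
      refine H.mono' (Set.insert_subset_insert (Set.subset_insert _ _)) ?_
      have hXsub : (↑X : Set ℕ) ⊆ ↑(X ∪ Finset.image v Finset.univ) := by
        intro y hy; exact Finset.mem_union_left _ hy
      rintro χ (rfl | rfl | hχ)
      · refine (Fml.fv_bsubst_subset _ _).trans (Set.union_subset (hφ.trans hXsub) ?_)
        intro y hy
        obtain ⟨j, hj⟩ := Set.mem_iUnion.mp hy
        rcases hj with rfl
        exact Finset.mem_union_right _ (Finset.mem_image.mpr ⟨j, Finset.mem_univ _, rfl⟩)
      · refine (Fml.fv_bsubst_subset _ _).trans (Set.union_subset (hφ.trans hXsub) ?_)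
        intro y hy
        obtain ⟨j, hj⟩ := Set.mem_iUnion.mp hy
        rcases hj with rfl
        exact Finset.mem_union_right _
          (Finset.mem_image.mpr ⟨j.castSucc, Finset.mem_univ _, rfl⟩)
      · exact (hΓ χ hχ).trans hXsub

/- ### List-of-atoms manipulation lemmas -/

lemma prv_listConj_inst {em : Prop} {X : Finset ℕ} {Γ : Set (Fml F far R rar 0)}
    {m : ℕ} (μ : Fin m → Tm F far) :
    ∀ (l : List (CAtom F far R rar m)), (∀ a ∈ l, atomF (CAtom.inst μ a) ∈ Γ) →
      Prv em X Γ ((listConj l).bsubst fun i => (μ i).toTmc)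
  | [], _ => Prv.topI
  | a :: l, h => by
    show Prv em X Γ (.conj ((Fml.atom a.1 a.2).bsubst fun i => (μ i).toTmc)
      ((listConj l).bsubst fun i => (μ i).toTmc))
    refine Prv.conjI ?_
      (prv_listConj_inst μ l fun b hb => h b (List.mem_cons_of_mem _ hb))
    have e : (Fml.atom a.1 a.2).bsubst (fun i => ((μ i).toTmc : Tmc F far 0))
        = atomF (CAtom.inst μ a) := by
      show Fml.atom a.1 _ = Fml.atom a.1 _
      congr 1
      funext i
      exact Tmc.bsubst_toTmc_eval μ (a.2 i)
    rw [e]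
    exact Prv.ax (h a (List.mem_cons_self))

lemma prv_listConj_proj {em : Prop} {X : Finset ℕ} {Γ : Set (Fml F far R rar 0)}
    {m : ℕ} (μ : Fin m → Tm F far) :
    ∀ (l : List (CAtom F far R rar m)),
      Prv em X Γ ((listConj l).bsubst fun i => (μ i).toTmc) →
      ∀ a ∈ l, Prv em X Γ (atomF (CAtom.inst μ a))
  | [], _, a, ha => absurd ha (List.not_mem_nil)
  | b :: l, h, a, ha => by
    have h' : Prv em X Γ (.conj ((Fml.atom b.1 b.2).bsubst fun i => (μ i).toTmc)
        ((listConj l).bsubst fun i => (μ i).toTmc)) := h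
    rcases List.mem_cons.mp ha with rfl | ha'
    · have e : (Fml.atom a.1 a.2).bsubst (fun i => ((μ i).toTmc : Tmc F far 0))
          = atomF (CAtom.inst μ a) := by
        show Fml.atom a.1 _ = Fml.atom a.1 _
        congr 1
        funext i
        exact Tmc.bsubst_toTmc_eval μ (a.2 i)
      rw [← e]
      exact Prv.conjE1 h'
    · exact prv_listConj_proj μ l (Prv.conjE2 h') a ha'

lemma prv_imps_intro {em : Prop} {X : Finset ℕ} {ψ : Fml F far R rar 0} {m : ℕ}
    (g : CAtom F far R rar m → Fml F far R rar 0) :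
    ∀ (l : List (CAtom F far R rar m)) (Γ : Set (Fml F far R rar 0)),
      Prv em X (g '' {a | a ∈ l} ∪ Γ) ψ →
      Prv em X Γ (l.foldr (fun a χ => .imp (g a) χ) ψ)
  | [], Γ, h => by
    have e : (g '' {a : CAtom F far R rar m | a ∈ ([] : List (CAtom F far R rar m))}
        ∪ Γ) = Γ := by
      simp
    rwa [e] at h
  | a :: l, Γ, h => by
    refine Prv.impI (prv_imps_intro g l _ ?_)
    have e : g '' {b | b ∈ a :: l} ∪ Γ = g '' {b | b ∈ l} ∪ insert (g a) Γ := by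
      ext χ
      simp only [Set.mem_union, Set.mem_image, Set.mem_setOf_eq, List.mem_cons,
        Set.mem_insert_iff]
      constructor
      · rintro (⟨b, (rfl | hb), rfl⟩ | hχ)
        · exact Or.inr (Or.inl rfl)
        · exact Or.inl ⟨b, hb, rfl⟩
        · exact Or.inr (Or.inr hχ)
      · rintro (⟨b, hb, rfl⟩ | rfl | hχ)
        · exact Or.inl ⟨b, Or.inr hb, rfl⟩
        · exact Or.inl ⟨a, Or.inl rfl, rfl⟩
        · exact Or.inr hχ
    rwa [e] at h

lemma prv_imps_elim {em : Prop} {X : Finset ℕ} {ψ : Fml F far R rar 0} {m : ℕ}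
    (g : CAtom F far R rar m → Fml F far R rar 0) :
    ∀ (l : List (CAtom F far R rar m)) (Γ : Set (Fml F far R rar 0)),
      Prv em X Γ (l.foldr (fun a χ => .imp (g a) χ) ψ) →
      (∀ a ∈ l, Prv em X Γ (g a)) → Prv em X Γ ψ
  | [], Γ, h, _ => h
  | a :: l, Γ, h, hg =>
    prv_imps_elim g l Γ (Prv.impE h (hg a (List.mem_cons_self)))
      (fun b hb => hg b (List.mem_cons_of_mem _ hb))

/- ### fresh variables -/

lemma freshVar_not_mem (C : Cond F far R rar) (j : ℕ) : freshVar C j ∉ C.X := by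
  intro h
  have := Finset.le_sup (f := id) h
  simp only [id] at this
  unfold freshVar at this
  omega

lemma freshVar_injective (C : Cond F far R rar) : Function.Injective (freshVar C) := by
  intro a b hab
  unfold freshVar at hab
  omega

/- ### The per-disjunct step of the main theorem -/

lemma step_disjunct {T : Set (CohAx F far R rar)} {C : Cond F far R rar}
    {ψ : Fml F far R rar 0} {m k : ℕ} (ι : Fin m → Tm F far)
    (hι : ∀ i, (ι i).fv ⊆ ↑C.X) (d : List (CAtom F far R rar (m + k)))
    (hd : ∀ a ∈ d, ∀ i, (a.2 i).noFvar)
    (hψ : Fml.fv ψ ⊆ ↑C.X)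
    (hT : ∀ χ ∈ (CohAx.toFml '' T ∪ atomF '' C.A : Set (Fml F far R rar 0)),
      Fml.fv χ ⊆ ↑C.X)
    (P1 : Prv False (C.extend ι hι d hd).X
      (CohAx.toFml '' T ∪ atomF '' (C.extend ι hι d hd).A) ψ) :
    Prv False C.X
      (insert ((Fml.exs k (listConj d)).bsubst fun j => (ι j).toTmc)
        (CohAx.toFml '' T ∪ atomF '' C.A)) ψ := by
  classical
  have hexs : (Fml.exs k (listConj d)).bsubst (fun j => ((ι j).toTmc : Tmc F far 0))
      = Fml.exs k ((listConj d).bsubst (iterExtend k fun j => (ι j).toTmc)) :=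
    Fml.exs_bsubst k _ _
  have hfvd : (listConj d).fv = ∅ := listConj_fv d hd
  have hφ0fv : ((listConj d).bsubst (iterExtend k fun j => ((ι j).toTmc : Tmc F far 0))).fv
      ⊆ ↑C.X := by
    refine (Fml.fv_bsubst_subset _ _).trans (Set.union_subset ?_ ?_)
    · rw [hfvd]; exact Set.empty_subset _
    · exact Set.iUnion_subset fun j =>
        iterExtend_fv k _ _ (fun j2 => by rw [Tmc.fv_toTmc]; exact hι j2) j
  have hexsfv : ((Fml.exs k (listConj d)).bsubst fun j => ((ι j).toTmc : Tmc F far 0)).fv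
      ⊆ ↑C.X := by
    refine (Fml.fv_bsubst_subset _ _).trans (Set.union_subset ?_ ?_)
    · rw [Fml.fv_exs, hfvd]; exact Set.empty_subset _
    · exact Set.iUnion_subset fun j => by rw [Tmc.fv_toTmc]; exact hι j
  refine exs_elim k ((listConj d).bsubst (iterExtend k fun j => (ι j).toTmc)) C.X _ ψ
      (fun j => freshVar C j.val)
      (fun a b hab => Fin.ext (freshVar_injective C hab))
      (fun j => freshVar_not_mem C _) hφ0fv hψ ?_ ?_ ?_
  · rintro χ (rfl | hχ)
    · exact hexsfv
    · exact hT χ hχ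
  · rw [← hexs]
    exact Prv.ax (Set.mem_insert _ _)
  · -- the continuation
    have e6 : ((listConj d).bsubst (iterExtend k fun j => ((ι j).toTmc : Tmc F far 0))).bsubst
          (fun i : Fin (0 + k) =>
            (.fvar ((fun j : Fin (0 + k) => freshVar C j.val) i) : Tmc F far 0))
        = (listConj d).bsubst fun j =>
            ((Fin.append ι fun j2 : Fin k => Tm.fvar (freshVar C (j2 : ℕ))) j).toTmc := by
      rw [Fml.bsubst_bsubst]
      congr 1
      funext j
      exact iterExtend_inst k ι (fun i => Tm.fvar (freshVar C i.val)) j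
    have e7 : C.X ∪ Finset.image (fun j : Fin (0 + k) => freshVar C j.val) Finset.univ
        = (C.extend ι hι d hd).X := by
      show _ = C.X ∪ Finset.image (fun j : Fin k => freshVar C (j : ℕ)) Finset.univ
      congr 1
      ext a
      simp only [Finset.mem_image, Finset.mem_univ, true_and]
      constructor
      · rintro ⟨j, rfl⟩
        exact ⟨⟨j.val, by have := j.isLt; omega⟩, rfl⟩
      · rintro ⟨j, rfl⟩
        exact ⟨⟨j.val, by have := j.isLt; omega⟩, rfl⟩
    rw [e6, e7]
    have eΓE : CohAx.toFml '' T ∪ atomF '' (C.extend ι hι d hd).A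
        = (fun a => atomF (CAtom.inst
            (Fin.append ι fun j : Fin k => Tm.fvar (freshVar C (j : ℕ))) a)) ''
            {a | a ∈ d} ∪ (CohAx.toFml '' T ∪ atomF '' C.A) := by
      show CohAx.toFml '' T ∪ atomF '' (C.A ∪ CAtom.inst
          (Fin.append ι fun j : Fin k => Tm.fvar (freshVar C (j : ℕ))) '' {a | a ∈ d}) = _
      rw [Set.image_union, Set.image_image]
      ext χ
      simp only [Set.mem_union]
      tauto
    rw [eΓE] at P1
    have P2 := prv_imps_intro _ d _ P1
    have hCsub : (↑C.X : Set ℕ) ⊆ ↑(C.extend ι hι d hd).X :=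
      Finset.coe_subset.mpr Finset.subset_union_left
    have hEfv : ∀ χ ∈ insert ((listConj d).bsubst fun j =>
          ((Fin.append ι fun j2 : Fin k => Tm.fvar (freshVar C (j2 : ℕ))) j).toTmc)
        (insert ((Fml.exs k (listConj d)).bsubst fun j => ((ι j).toTmc : Tmc F far 0))
          (CohAx.toFml '' T ∪ atomF '' C.A)),
        Fml.fv χ ⊆ ↑(C.extend ι hι d hd).X := by
      rintro χ (rfl | rfl | hχ)
      · refine (Fml.fv_bsubst_subset _ _).trans (Set.union_subset ?_ ?_)
        · rw [hfvd]; exact Set.empty_subset _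
        · refine Set.iUnion_subset fun j => ?_
          rw [Tmc.fv_toTmc]
          refine j.addCases (fun jl => ?_) (fun jr => ?_)
          · rw [Fin.append_left]
            exact (hι jl).trans hCsub
          · rw [Fin.append_right]
            intro y hy
            have hy' : y = freshVar C (jr : ℕ) := hy
            subst hy'
            exact Finset.mem_union_right _
              (Finset.mem_image.mpr ⟨jr, Finset.mem_univ _, rfl⟩)
      · exact hexsfv.trans hCsub
      · exact (hT χ hχ).trans hCsub
    refine prv_imps_elim _ d _ (P2.mono' ?_ hEfv) ?_
    · exact (Set.subset_insert _ _).trans (Set.subset_insert _ _)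
    · intro a ha
      exact prv_listConj_proj _ d (Prv.ax (Set.mem_insert _ _)) a ha

end Aux16

/- STATEMENT 16: Local character of provability.  If (X;A) ◁_T U and ψ is a formula
with free variables in X such that T, B ⊢_Y ψf for every f : (Y;B) → (X;A) in U,
then T, A ⊢_X ψ (intuitionistic provability). -/
theorem local_character_of_provability (T : Set (CohAx F far R rar))
    {C : Cond F far R rar} {U : Sink F far R rar} (hCU : Cov T C U)
    (ψ : Fml F far R rar 0) (hψ : Fml.fv ψ ⊆ ↑C.X)
    (h : ∀ p ∈ U,
      Prv False p.1.X (CohAx.toFml '' T ∪ atomF '' p.1.A) (Fml.substFv p.2 ψ)) :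
    Prv False C.X (CohAx.toFml '' T ∪ atomF '' C.A) ψ := by
  classical
  revert hψ h
  induction hCU with
  | @iso C D σ hiso =>
    intro hψ h
    obtain ⟨mσ, τ, mτ, hτσ, hστ⟩ := hiso
    have P := h (D, σ) rfl
    by_cases hCne : C.X.Nonempty
    · obtain ⟨c0, hc0⟩ := hCne
      set σ' : ℕ → Tm F far :=
        fun y => if (τ y).fv ⊆ ↑C.X then τ y else .fvar c0 with hσ'def
      have hσ' : ∀ y, (σ' y).fv ⊆ ↑C.X := by
        intro y
        simp only [hσ'def]
        split_ifs with hy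
        · exact hy
        · intro z hz; rcases hz with rfl; exact hc0
      have hσ'D : ∀ y ∈ D.X, σ' y = τ y := by
        intro y hy
        simp only [hσ'def]
        rw [if_pos (mτ.fvsub y hy)]
      have key := P.substFv σ' C.X hσ'
      have hfml : (ψ.substFv σ).substFv σ' = ψ := by
        rw [Fml.substFv_substFv]
        refine Fml.substFv_eq_self fun z hz => ?_
        have hzX := hψ hz
        obtain ⟨y, hy⟩ := mσ.cls.1 z hzX
        have hyD : y ∈ D.X := by
          have h2 := mσ.fvsub z hzX
          rw [hy] at h2
          exact h2 rfl
        rw [hy]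
        show σ' y = Tm.fvar z
        rw [hσ'D y hyD]
        have h3 := hτσ z hzX
        rw [hy] at h3
        exact h3
      rw [hfml] at key
      refine key.mono' ?_ ?_
      · rintro χ ⟨γ, hγ, rfl⟩
        rcases hγ with ⟨ax', hax', rfl⟩ | ⟨a, ha, rfl⟩
        · left
          refine ⟨ax', hax', ?_⟩
          symm
          refine Fml.substFv_eq_self fun z hz => ?_
          rw [CohAx.fv_toFml] at hz
          exact absurd hz (Set.notMem_empty z)
        · right
          rw [atomF_substFv]
          refine ⟨Atom.subst σ' a, ?_, rfl⟩
          have e : Atom.subst σ' a = Atom.subst τ a :=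
            Atom.subst_congr fun z hz => hσ'D z (D.wf a ha hz)
          rw [e]
          exact mτ.atoms a ha
      · rintro χ (⟨ax', _, rfl⟩ | ⟨a, ha, rfl⟩)
        · rw [CohAx.fv_toFml]; exact Set.empty_subset _
        · rw [atomF_fv]; exact C.wf a ha
    · rw [Finset.not_nonempty_iff_eq_empty] at hCne
      have hDX : D.X = ∅ := by
        rw [Finset.eq_empty_iff_forall_notMem]
        intro y hy
        obtain ⟨z, hz⟩ := mτ.cls.1 y hy
        have h2 := mτ.fvsub y hy
        rw [hz] at h2
        have h3 : z ∈ C.X := h2 rfl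
        rw [hCne] at h3
        exact absurd h3 (Finset.notMem_empty z)
      have hAeq : D.A = C.A := by
        ext a
        constructor
        · intro ha
          have h1 := mτ.atoms a ha
          have e : Atom.subst τ a = a := by
            have h2 := Atom.subst_congr (σ := τ) (σ' := Tm.fvar) (a := a) ?_
            · rw [h2, Atom.subst_fvar]
            · intro z hz
              have h3 := D.wf a ha hz
              rw [hDX] at h3
              exact absurd h3 (by simp)
          rwa [e] at h1
        · intro ha
          have h1 := mσ.atoms a ha
          have e : Atom.subst σ a = a := by
            have h2 := Atom.subst_congr (σ := σ) (σ' := Tm.fvar) (a := a) ?_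
            · rw [h2, Atom.subst_fvar]
            · intro z hz
              have h3 := C.wf a ha hz
              rw [hCne] at h3
              exact absurd h3 (by simp)
          rwa [e] at h1
      have hfml : ψ.substFv σ = ψ := by
        refine Fml.substFv_eq_self fun z hz => ?_
        have h2 := hψ hz
        rw [hCne] at h2
        exact absurd h2 (by simp)
      rw [hDX, hAeq, hfml] at P
      rw [hCne]
      exact P
  | @step C ax hax ι hι hhyp U hU IH =>
    intro hψ h
    have hΓcfv : ∀ χ ∈ (CohAx.toFml '' T ∪ atomF '' C.A : Set (Fml F far R rar 0)),
        Fml.fv χ ⊆ ↑C.X := by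
      rintro χ (⟨ax', _, rfl⟩ | ⟨a, ha, rfl⟩)
      · rw [CohAx.fv_toFml]; exact Set.empty_subset _
      · rw [atomF_fv]; exact C.wf a ha
    have h0 : Prv False C.X (CohAx.toFml '' T ∪ atomF '' C.A) (Fml.alls ax.m
        (.imp (listConj ax.hyp) (.disj (Fin ax.concl.length) fun i =>
          .exs (ax.concl.get i).1 (listConj (ax.concl.get i).2)))) :=
      Prv.ax (Or.inl ⟨ax, hax, rfl⟩)
    have h1 := Prv.alls_inst _ ι hι h0
    have h1' : Prv False C.X (CohAx.toFml '' T ∪ atomF '' C.A)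
        (.imp ((listConj ax.hyp).bsubst fun i => (ι i).toTmc)
          (.disj (Fin ax.concl.length) fun j =>
            (Fml.exs (ax.concl.get j).1 (listConj (ax.concl.get j).2)).bsubst
              fun i => (ι i).toTmc)) := h1
    have h2 : Prv False C.X (CohAx.toFml '' T ∪ atomF '' C.A)
        ((listConj ax.hyp).bsubst fun i => (ι i).toTmc) :=
      prv_listConj_inst ι ax.hyp fun a ha => Or.inr ⟨_, hhyp a ha, rfl⟩
    refine Prv.disjE (Prv.impE h1' h2) fun i => ?_
    exact step_disjunct (T := T) ι hι (ax.concl.get i).2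
      (fun a ha j => ax.conclClosed _ (ax.concl.get_mem i) a ha j)
      hψ hΓcfv
      (IH i (hψ.trans (Finset.coe_subset.mpr Finset.subset_union_left))
        (fun p hp => h p (Set.mem_iUnion.mpr ⟨i, hp⟩)))

end CoherentForcing
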